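/- Let ρ ∈ (0,1). For a real m×n feedback matrix F define the discrete-time tracking error ε(ξ₀, t) := (C + D·F) · (A + B·F)^t · ξ₀ ∈ ℝ^p for ξ₀ ∈ ℝ^n and t ∈ ℕ. Then the following two conditions on F are equivalent: (i) A + B·F is Schur (every complex eigenvalue of A + B·F has modulus < 1) and for every ξ₀ ∈ ℝ^n and every k ∈ {1,…,p} there exists β ≥ 0 such that |ε(ξ₀,t)_k| ≤ β·ρ^t for all t ∈ ℕ and the sequence t ↦ ε(ξ₀,t)_k is monotone (nondecreasing or nonincreasing); (ii) A + B·F is Schur and there exist real numbers λ₁,…,λ_p with 0 ≤ λ_k ≤ ρ for every k, such that for every ξ₀ ∈ ℝ^n there exist real coefficients β₁,…,β_p with ε(ξ₀,t)_k = β_k·λ_k^t for all t ∈ ℕ and all k ∈ {1,…,p}. -/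

import Mathlib

open Filter Topology

/-- The discrete-time tracking error `ε(ξ₀,t) = (C+DF)·(A+BF)^t·ξ₀`. -/
def trackErrD {n m p : ℕ} (A : Matrix (Fin n) (Fin n) ℝ)
    (B : Matrix (Fin n) (Fin m) ℝ) (C : Matrix (Fin p) (Fin n) ℝ)
    (D : Matrix (Fin p) (Fin m) ℝ) (F : Matrix (Fin m) (Fin n) ℝ)
    (ξ₀ : Fin n → ℝ) (t : ℕ) : Fin p → ℝ :=
  (C + D * F).mulVec (((A + B * F) ^ t).mulVec ξ₀)

/-- `M` is Schur: every complex eigenvalue (root of the characteristic polynomial of the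
complexification) has modulus strictly smaller than one. -/
def IsSchur {n : ℕ} (M : Matrix (Fin n) (Fin n) ℝ) : Prop :=
  ∀ z : ℂ, (Matrix.charpoly (M.map Complex.ofReal)).IsRoot z → ‖z‖ < 1

theorem global_monotonicity_iff_single_mode_discrete
    (n m p : ℕ) (hn : 0 < n) (hm : 0 < m) (hp : 0 < p)
    (A : Matrix (Fin n) (Fin n) ℝ) (B : Matrix (Fin n) (Fin m) ℝ)
    (C : Matrix (Fin p) (Fin n) ℝ) (D : Matrix (Fin p) (Fin m) ℝ)
    (ρ : ℝ) (hρ0 : 0 < ρ) (hρ1 : ρ < 1) (F : Matrix (Fin m) (Fin n) ℝ) :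
    (IsSchur (A + B * F) ∧
      ∀ (ξ₀ : Fin n → ℝ) (k : Fin p), ∃ β : ℝ, 0 ≤ β ∧
        (∀ t : ℕ, |trackErrD A B C D F ξ₀ t k| ≤ β * ρ ^ t) ∧
        (Monotone (fun t : ℕ => trackErrD A B C D F ξ₀ t k) ∨
         Antitone (fun t : ℕ => trackErrD A B C D F ξ₀ t k)))
    ↔
    (IsSchur (A + B * F) ∧
      ∃ lam : Fin p → ℝ, (∀ k, 0 ≤ lam k ∧ lam k ≤ ρ) ∧
        ∀ ξ₀ : Fin n → ℝ, ∃ β : Fin p → ℝ,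
          ∀ t : ℕ, ∀ k : Fin p,
            trackErrD A B C D F ξ₀ t k = β k * lam k ^ t) := by
  set M := A + B * F with hMdef
  set W := C + D * F with hWdef
  have hE : ∀ (ξ : Fin n → ℝ) (t : ℕ) (k : Fin p),
      trackErrD A B C D F ξ t k = W.mulVec ((M ^ t).mulVec ξ) k := fun _ _ _ => rfl
  constructor
  · rintro ⟨hS, h⟩
    refine ⟨hS, ?_⟩
    have key : ∀ k : Fin p, ∃ lam : ℝ, 0 ≤ lam ∧ lam ≤ ρ ∧
        ∀ (ξ : Fin n → ℝ) (t : ℕ),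
          W.mulVec ((M ^ t).mulVec ξ) k = W.mulVec ξ k * lam ^ t := by
      intro k
      set f : (Fin n → ℝ) → ℝ := fun ξ => W.mulVec ξ k with hf
      have flin : ∀ (a b : Fin n → ℝ) (c : ℝ), f (a + c • b) = f a + c * f b := by
        intro a b c
        simp [hf, Matrix.mulVec_add, Matrix.mulVec_smul]
      have htend : ∀ ξ, Filter.Tendsto (fun t => trackErrD A B C D F ξ t k)
          Filter.atTop (nhds 0) := by
        intro ξ
        obtain ⟨β, hβ0, hb, -⟩ := h ξ k
        have hb' : ∀ t, ‖trackErrD A B C D F ξ t k‖ ≤ β * ρ ^ t := by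
          simpa [Real.norm_eq_abs] using hb
        have hg : Filter.Tendsto (fun t : ℕ => β * ρ ^ t) Filter.atTop (nhds 0) := by
          simpa using (tendsto_pow_atTop_nhds_zero_of_lt_one hρ0.le hρ1).const_mul β
        exact squeeze_zero_norm hb' hg
      have stepA : ∀ ξ, 0 < f ξ → 0 ≤ f (M.mulVec ξ) ∧ f (M.mulVec ξ) ≤ f ξ := by
        intro ξ hξ
        obtain ⟨β, hβ0, hb, hmono⟩ := h ξ k
        have ht0 := htend ξ
        have hE0 : trackErrD A B C D F ξ 0 k = f ξ := by
          simp [hE, hf]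
        have hE1 : trackErrD A B C D F ξ 1 k = f (M.mulVec ξ) := by
          simp [hE, hf, pow_one]
        rcases hmono with hm | ha
        · exfalso
          have := hm.ge_of_tendsto ht0 0
          rw [hE0] at this
          linarith
        · constructor
          · have := ha.le_of_tendsto ht0 1
            rwa [hE1] at this
          · have := ha (Nat.zero_le 1)
            simpa only [hE0, hE1] using this
      by_cases hzero : ∀ ξ, f ξ = 0
      · refine ⟨0, le_refl 0, hρ0.le, fun ξ t => ?_⟩
        show f ((M ^ t).mulVec ξ) = f ξ * 0 ^ t
        rw [hzero, hzero, zero_mul]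
      · push_neg at hzero
        obtain ⟨ξ₁, hξ₁⟩ := hzero
        set ξs : Fin n → ℝ := (f ξ₁)⁻¹ • ξ₁ with hξs
        have hfξs : f ξs = 1 := by
          have : f ξs = (f ξ₁)⁻¹ * f ξ₁ := by
            simp [hξs, hf, Matrix.mulVec_smul]
          rw [this, inv_mul_cancel₀ hξ₁]
        set lam : ℝ := f (M.mulVec ξs) with hlamdef
        have h01 : 0 ≤ lam ∧ lam ≤ 1 := by
          have := stepA ξs (by rw [hfξs]; norm_num)
          rw [hfξs] at this
          exact this
        have hstep : ∀ ξ, f (M.mulVec ξ) = lam * f ξ := by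
          intro ξ
          set η := ξ + (-(f ξ)) • ξs with hη
          have hfη : f η = 0 := by
            rw [hη, flin, hfξs]; ring
          have hMη : f (M.mulVec η) = 0 := by
            have hub : ∀ δ : ℝ, 0 < δ →
                f (M.mulVec η) ≤ δ ∧ -δ ≤ f (M.mulVec η) := by
              intro δ hδ
              have hpos : 0 < f (η + δ • ξs) := by
                rw [flin, hfη, hfξs]; simpa using hδ
              have hA := stepA _ hpos
              have heq : f (M.mulVec (η + δ • ξs)) = f (M.mulVec η) + δ * lam := by
                have : M.mulVec (η + δ • ξs) = M.mulVec η + δ • M.mulVec ξs := by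
                  rw [Matrix.mulVec_add, Matrix.mulVec_smul]
                rw [this, flin]
              have heq2 : f (η + δ • ξs) = δ := by
                rw [flin, hfη, hfξs]; ring
              rw [heq, heq2] at hA
              constructor <;> nlinarith [h01.1, h01.2]
            rcases lt_trichotomy (f (M.mulVec η)) 0 with hlt | heq0 | hgt
            · have := (hub (-(f (M.mulVec η)) / 2) (by linarith)).2
              linarith
            · exact heq0
            · have := (hub (f (M.mulVec η) / 2) (by linarith)).1
              linarith
          have hsplit : M.mulVec ξ = M.mulVec η + (f ξ) • M.mulVec ξs := by
            rw [hη, Matrix.mulVec_add, Matrix.mulVec_smul]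
            simp [neg_smul]
          rw [hsplit, flin, hMη, ← hlamdef]; ring
        have hiter : ∀ (t : ℕ) (ξ), f ((M ^ t).mulVec ξ) = lam ^ t * f ξ := by
          intro t
          induction t with
          | zero => intro ξ; simp
          | succ t ih =>
            intro ξ
            have hv : (M ^ (t + 1)).mulVec ξ = (M ^ t).mulVec (M.mulVec ξ) := by
              rw [pow_succ, ← Matrix.mulVec_mulVec]
            rw [hv, ih, hstep, pow_succ]; ring
        have hiterW : ∀ (t : ℕ) (ξ : Fin n → ℝ),
            W.mulVec ((M ^ t).mulVec ξ) k = lam ^ t * W.mulVec ξ k := hiter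
        have hle : lam ≤ ρ := by
          by_contra hlt
          push_neg at hlt
          obtain ⟨β, hβ0, hb, -⟩ := h ξs k
          have hbd : ∀ t, lam ^ t ≤ β * ρ ^ t := by
            intro t
            have hb' := hb t
            rw [hE, hiterW t ξs] at hb'
            have hfs : W.mulVec ξs k = 1 := hfξs
            rw [hfs, mul_one] at hb'
            exact (le_abs_self _).trans hb'
          have h1 : 1 < lam / ρ := (one_lt_div hρ0).2 hlt
          obtain ⟨t, ht⟩ := pow_unbounded_of_one_lt β h1
          rw [div_pow] at ht
          have hρt : 0 < ρ ^ t := pow_pos hρ0 t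
          have := (lt_div_iff₀ hρt).1 ht
          nlinarith [hbd t]
        exact ⟨lam, h01.1, hle, fun ξ t => by rw [hiterW t ξ]; ring⟩
    choose lam hlam0 hlamρ hlam using key
    refine ⟨lam, fun k => ⟨hlam0 k, hlamρ k⟩,
      fun ξ₀ => ⟨fun k => W.mulVec ξ₀ k, fun t k => ?_⟩⟩
    rw [hE]
    exact hlam k ξ₀ t
  · rintro ⟨hS, lam, hlam, hβ⟩
    refine ⟨hS, fun ξ₀ k => ?_⟩
    obtain ⟨β, hβ⟩ := hβ ξ₀
    have hlk0 := (hlam k).1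
    have hlk1 : lam k ≤ 1 := (hlam k).2.trans hρ1.le
    refine ⟨|β k|, abs_nonneg _, ?_, ?_⟩
    · intro t
      rw [hβ t k, abs_mul, abs_pow, abs_of_nonneg hlk0]
      exact mul_le_mul_of_nonneg_left
        (pow_le_pow_left₀ hlk0 (hlam k).2 t) (abs_nonneg _)
    · rcases le_or_gt 0 (β k) with hbk | hbk
      · right
        intro s t hst
        show trackErrD A B C D F ξ₀ t k ≤ trackErrD A B C D F ξ₀ s k
        rw [hβ t k, hβ s k]
        exact mul_le_mul_of_nonneg_left (pow_le_pow_of_le_one hlk0 hlk1 hst) hbk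
      · left
        intro s t hst
        show trackErrD A B C D F ξ₀ s k ≤ trackErrD A B C D F ξ₀ t k
        rw [hβ t k, hβ s k]
        have := pow_le_pow_of_le_one hlk0 hlk1 hst
        nlinarith
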